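/- arXiv:2605.00995 — 2 statements merged into one kernel-verified Lean document; each statement's English description precedes it below -/
import Mathlib

section
/- Fix a prime p and integers m > k ≥ 1 and s ≥ 1. Let S be a finite multiset of k-dimensional linear subspaces of 𝔽_p^m (the same subspace may appear with multiplicity) with |S| ≥ s^{k+1}·p^{(k²+k−2)/2}. Then S contains a sunflower of size at least s: a sub-multiset V₁,…,V_s (counted with multiplicity) such that, with C = V₁ ∩ ⋯ ∩ V_s, one has V_i ∩ V_j = C for all i ≠ j. -/
open Finset

/-- Distribution of `f(X)` on `β` for `X` uniform on the finite type `α`. -/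
noncomputable def distOf {α β : Type*} [Fintype α] [DecidableEq β] (f : α → β) (y : β) : ℝ :=
  ((Finset.univ.filter fun x => f x = y).card : ℝ) / (Fintype.card α : ℝ)

/-- Output distribution on `𝔽₂ⁿ` of the tuple `(P₁(X),…,Pₙ(X))` for uniform `X ∈ 𝔽₂^m`. -/
noncomputable def outDist {m n : ℕ} (P : Fin n → (Fin m → ZMod 2) → ZMod 2) :
    (Fin n → ZMod 2) → ℝ :=
  distOf (fun x i => P i x)

/-- Total variation distance between two distributions on a finite type. -/
noncomputable def tvDist {β : Type*} [Fintype β] (μ ν : β → ℝ) : ℝ :=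
  (1 / 2) * ∑ y, |μ y - ν y|

/-- The distribution `Ber(1/3)^{⊗n}` on `𝔽₂ⁿ`. -/
noncomputable def ber13 {n : ℕ} (y : Fin n → ZMod 2) : ℝ :=
  (1 / 3 : ℝ) ^ (Finset.univ.filter fun i => y i = 1).card *
    (2 / 3 : ℝ) ^ (n - (Finset.univ.filter fun i => y i = 1).card)

/-- `P : 𝔽₂^m → 𝔽₂` has degree at most `d`. -/
def DegLE {m : ℕ} (d : ℕ) (P : (Fin m → ZMod 2) → ZMod 2) : Prop :=
  ∃ p : MvPolynomial (Fin m) (ZMod 2), p.totalDegree ≤ d ∧ ∀ x, MvPolynomial.eval x p = P x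

/-- `rank_{d'}(P) ≤ k`. -/
def RankLE {m : ℕ} (d' k : ℕ) (P : (Fin m → ZMod 2) → ZMod 2) : Prop :=
  ∃ (Q : Fin k → (Fin m → ZMod 2) → ZMod 2) (Γ : (Fin k → ZMod 2) → ZMod 2),
    (∀ j, DegLE d' (Q j)) ∧ ∀ x, P x = Γ (fun j => Q j x)

/-- `Pr_{X uniform}[P(X) = 1]`. -/
noncomputable def prOne {m : ℕ} (P : (Fin m → ZMod 2) → ZMod 2) : ℝ :=
  distOf P 1

open Module

-- exponent recurrence
private lemma gdiv_rec {j : ℕ} (hj : 1 ≤ j) :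
    ((j + 1) ^ 2 + (j + 1) - 2) / 2 = (j ^ 2 + j - 2) / 2 + (j + 1) := by
  have h1 : (j + 1) ^ 2 = j ^ 2 + 2 * j + 1 := by ring
  rcases Nat.even_or_odd j with ⟨r, hr⟩ | ⟨r, hr⟩
  · have h2 : j ^ 2 = 4 * r ^ 2 := by subst hr; ring
    have h3 : 0 ≤ r ^ 2 := Nat.zero_le _
    omega
  · have h2 : j ^ 2 = 4 * r ^ 2 + 4 * r + 1 := by subst hr; ring
    omega

-- double counting
private lemma double_count {α β : Type*} [DecidableEq β] (S : Multiset α) (X : Finset β)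
    (R : α → β → Prop) [∀ a b, Decidable (R a b)] :
    ∑ x ∈ X, Multiset.card (S.filter (fun V => R V x)) =
      (S.map (fun V => (X.filter (fun x => R V x)).card)).sum := by
  induction S using Multiset.induction_on with
  | empty => simp
  | cons V S ih =>
      simp only [Multiset.filter_cons, Multiset.card_add, Multiset.map_cons, Multiset.sum_cons,
        Finset.sum_add_distrib, ih]
      congr 1
      rw [Finset.card_filter]
      apply Finset.sum_congr rfl
      intro x _
      split <;> simp


private lemma sunflower_trivial {p m k s : ℕ} [Fact p.Prime] (hs : 1 ≤ s)
    (C : Submodule (ZMod p) (Fin m → ZMod p))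
    (S : Multiset (Submodule (ZMod p) (Fin m → ZMod p)))
    (hCk : k ≤ finrank (ZMod p) C)
    (hSV : ∀ V ∈ S, finrank (ZMod p) V = k ∧ C ≤ V)
    (hcard : s ≤ Multiset.card S) :
    ∃ V : Fin s → Submodule (ZMod p) (Fin m → ZMod p),
      (↑(List.ofFn V) : Multiset (Submodule (ZMod p) (Fin m → ZMod p))) ≤ S ∧
      ∀ i j, i ≠ j → V i ⊓ V j = ⨅ l, V l := by
  classical
  haveI : Nonempty (Fin s) := Fin.pos_iff_nonempty.mp (by omega)
  have hall : ∀ V ∈ S, C = V := by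
    intro V hV
    exact Submodule.eq_of_le_of_finrank_le (hSV V hV).2 (by rw [(hSV V hV).1]; exact hCk)
  refine ⟨fun _ => C, ?_, ?_⟩
  · rw [List.ofFn_const, Multiset.coe_replicate, Multiset.le_iff_count]
    intro a
    rw [Multiset.count_replicate]
    split
    · rename_i h
      rcases h with rfl | h
      all_goals
        calc s ≤ Multiset.card S := hcard
          _ = Multiset.count _ S := (Multiset.count_eq_card.mpr hall).symm
    · exact Nat.zero_le _
  · intro i j hij
    simp [iInf_const]

private lemma sunflower_extract {p m s : ℕ}
    (C : Submodule (ZMod p) (Fin m → ZMod p))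
    (S T : Multiset (Submodule (ZMod p) (Fin m → ZMod p)))
    (hTS : T ≤ S)
    (hCS : ∀ V ∈ S, C ≤ V)
    (hTpair : T.Pairwise (fun V W => V ⊓ W = C))
    (hTs : s ≤ Multiset.card T) :
    ∃ V : Fin s → Submodule (ZMod p) (Fin m → ZMod p),
      (↑(List.ofFn V) : Multiset (Submodule (ZMod p) (Fin m → ZMod p))) ≤ S ∧
      ∀ i j, i ≠ j → V i ⊓ V j = ⨅ l, V l := by
  obtain ⟨l, rfl, hlp⟩ := hTpair
  have hlen : s ≤ l.length := by simpa using hTs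
  set V : Fin s → Submodule (ZMod p) (Fin m → ZMod p) :=
    fun i => l.get ⟨i, lt_of_lt_of_le i.2 hlen⟩ with hV
  have hmem : ∀ i : Fin s, V i ∈ S :=
    fun i => Multiset.mem_of_le hTS (Multiset.mem_coe.mpr (l.get_mem _))
  have hCV : ∀ i, C ≤ V i := fun i => hCS _ (hmem i)
  have hpair : ∀ i j : Fin s, i ≠ j → V i ⊓ V j = C := by
    intro i j hij
    have hij' : (i : ℕ) ≠ (j : ℕ) := fun h => hij (Fin.ext h)
    rcases hij'.lt_or_gt with h | h
    · exact List.pairwise_iff_get.mp hlp _ _ h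
    · rw [inf_comm]
      exact List.pairwise_iff_get.mp hlp _ _ h
  refine ⟨V, ?_, ?_⟩
  · have h1 : List.ofFn V = l.take s := by
      apply List.ext_getElem
      · simp [List.length_take]; omega
      · intro n h1 h2
        simp [hV, List.getElem_take]
    rw [h1]
    exact le_trans (Multiset.coe_le.mpr (l.take_sublist s).subperm) hTS
  · intro i j hij
    have hinf : ⨅ l, V l = C := by
      apply le_antisymm
      · exact le_trans (le_inf (iInf_le _ i) (iInf_le _ j)) (le_of_eq (hpair i j hij))
      · exact le_iInf hCV
    rw [hinf, hpair i j hij]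

section Aux
variable {p m k s : ℕ} [Fact p.Prime]

private lemma sunflower_aux (hk : 1 ≤ k) (hs : 2 ≤ s) :
    ∀ (j : ℕ) (C : Submodule (ZMod p) (Fin m → ZMod p))
      (S : Multiset (Submodule (ZMod p) (Fin m → ZMod p))),
      k ≤ finrank (ZMod p) C + j →
      (∀ V ∈ S, finrank (ZMod p) V = k ∧ C ≤ V) →
      s ^ (j + 1) * p ^ ((j ^ 2 + j - 2) / 2) ≤ Multiset.card S →
      ∃ V : Fin s → Submodule (ZMod p) (Fin m → ZMod p),
        (↑(List.ofFn V) : Multiset (Submodule (ZMod p) (Fin m → ZMod p))) ≤ S ∧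
        ∀ i j, i ≠ j → V i ⊓ V j = ⨅ l, V l := by
  classical
  have hp1 : 1 < p := (Fact.out : p.Prime).one_lt
  intro j
  induction j with
  | zero =>
      intro C S hjC hSV hcard
      have hcards : s ≤ Multiset.card S := by
        refine le_trans ?_ hcard
        calc s = s ^ 1 * 1 := by ring
          _ ≤ s ^ (0 + 1) * p ^ ((0 ^ 2 + 0 - 2) / 2) :=
            Nat.mul_le_mul (le_refl _) (Nat.one_le_pow _ _ (by omega))
      exact sunflower_trivial (by omega) C S (by omega) hSV hcards
  | succ j ih =>
      intro C S hjC hSV hcard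
      have hcards : s ≤ Multiset.card S := by
        refine le_trans ?_ hcard
        calc s = s ^ 1 * 1 := by ring
          _ ≤ s ^ (j + 1 + 1) * p ^ (((j+1) ^ 2 + (j+1) - 2) / 2) :=
            Nat.mul_le_mul (Nat.pow_le_pow_right (by omega) (by omega))
              (Nat.one_le_pow _ _ (by omega))
      by_cases hCk : k ≤ finrank (ZMod p) C
      · exact sunflower_trivial (by omega) C S hCk hSV hcards
      push_neg at hCk
      set c := finrank (ZMod p) C with hc
      -- maximal pairwise family
      set r : Submodule (ZMod p) (Fin m → ZMod p) → Submodule (ZMod p) (Fin m → ZMod p) → Prop :=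
        fun V W => V ⊓ W = C with hr
      set 𝒯 : Finset (Multiset (Submodule (ZMod p) (Fin m → ZMod p))) :=
        (S.powerset.filter (fun T => T.Pairwise r)).toFinset with h𝒯
      have h0 : (0 : Multiset (Submodule (ZMod p) (Fin m → ZMod p))) ∈ 𝒯 := by
        rw [h𝒯, Multiset.mem_toFinset, Multiset.mem_filter, Multiset.mem_powerset]
        exact ⟨Multiset.zero_le S, Multiset.pairwise_zero r⟩
      obtain ⟨T, hT𝒯, hTmax⟩ := 𝒯.exists_max_image Multiset.card ⟨0, h0⟩
      rw [h𝒯, Multiset.mem_toFinset, Multiset.mem_filter, Multiset.mem_powerset] at hT𝒯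
      obtain ⟨hTS, hTpair⟩ := hT𝒯
      by_cases hTs : s ≤ Multiset.card T
      · refine sunflower_extract C S T hTS (fun V hV => (hSV V hV).2) ?_ hTs
        obtain ⟨l, hl, hlp⟩ := hTpair
        exact ⟨l, hl, hlp⟩
      push_neg at hTs
      -- every V ∈ S meets some W ∈ T above C
      have key : ∀ V ∈ S, ∃ W ∈ T, C < V ⊓ W := by
        intro V hV
        have hCV : C ≤ V := (hSV V hV).2
        by_cases hcnt : Multiset.count V T < Multiset.count V S
        · by_contra hno
          push_neg at hno
          have hrall : ∀ W ∈ T, V ⊓ W = C := by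
            intro W hW
            have hCW : C ≤ W := (hSV W (Multiset.mem_of_le hTS hW)).2
            exact ((le_inf hCV hCW).lt_or_eq.resolve_left (hno W hW)).symm
          have hcons : V ::ₘ T ≤ S := by
            rw [Multiset.le_iff_count]
            intro a
            rw [Multiset.count_cons]
            by_cases ha : a = V
            · subst ha; simpa using hcnt
            · simp only [ha, if_false, add_zero]
              exact Multiset.le_iff_count.mp hTS a
          have hpair' : (V ::ₘ T).Pairwise r := by
            obtain ⟨l, hl, hlp⟩ := hTpair
            refine ⟨V :: l, by rw [hl]; rfl, List.Pairwise.cons ?_ hlp⟩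
            intro W hW
            exact hrall W (by rw [hl]; exact Multiset.mem_coe.mpr hW)
          have hmem' : V ::ₘ T ∈ 𝒯 := by
            rw [h𝒯, Multiset.mem_toFinset, Multiset.mem_filter, Multiset.mem_powerset]
            exact ⟨hcons, hpair'⟩
          have := hTmax _ hmem'
          simp at this
        · have hVT : V ∈ T := by
            have := Multiset.count_pos.mpr hV
            rw [← Multiset.count_pos]
            omega
          refine ⟨V, hVT, ?_⟩
          rw [inf_idem]
          refine lt_of_le_of_ne hCV ?_
          intro h
          have h2 : c = finrank (ZMod p) V := by rw [hc, h]
          rw [(hSV V hV).1] at h2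
          omega
      -- counting setup
      set Fv : Submodule (ZMod p) (Fin m → ZMod p) → Finset (Fin m → ZMod p) :=
        fun W => Finset.univ.filter (· ∈ W) with hFv
      have hFvcard : ∀ W : Submodule (ZMod p) (Fin m → ZMod p),
          (Fv W).card = p ^ finrank (ZMod p) W := by
        intro W
        rw [hFv]
        rw [← Fintype.card_subtype, card_eq_pow_finrank (K := ZMod p), ZMod.card]
      have hFvmono : ∀ {A B : Submodule (ZMod p) (Fin m → ZMod p)}, A ≤ B → Fv A ⊆ Fv B := by
        intro A B hAB y hy
        rw [hFv, Finset.mem_filter] at hy ⊢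
        exact ⟨hy.1, hAB hy.2⟩
      set X : Finset (Fin m → ZMod p) :=
        Finset.univ.filter (fun x => (∃ W ∈ T, x ∈ W) ∧ x ∉ C) with hX
      have hXcard : X.card ≤ (s - 1) * (p ^ k - p ^ c) := by
        have hXsub : X ⊆ T.toFinset.biUnion (fun W => Fv W \ Fv C) := by
          intro x hx
          rw [hX, Finset.mem_filter] at hx
          obtain ⟨-, ⟨W, hWT, hxW⟩, hxC⟩ := hx
          rw [Finset.mem_biUnion]
          refine ⟨W, Multiset.mem_toFinset.mpr hWT, ?_⟩
          rw [Finset.mem_sdiff, hFv]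
          simp only [Finset.mem_filter, Finset.mem_univ, true_and]
          exact ⟨hxW, hxC⟩
        calc X.card ≤ (T.toFinset.biUnion (fun W => Fv W \ Fv C)).card :=
              Finset.card_le_card hXsub
          _ ≤ ∑ W ∈ T.toFinset, (Fv W \ Fv C).card := Finset.card_biUnion_le
          _ ≤ ∑ _W ∈ T.toFinset, (p ^ k - p ^ c) := by
              apply Finset.sum_le_sum
              intro W hW
              have hWS : W ∈ S := Multiset.mem_of_le hTS (Multiset.mem_toFinset.mp hW)
              have h1 : Fv C ⊆ Fv W := hFvmono (hSV W hWS).2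
              rw [Finset.card_sdiff_of_subset h1, hFvcard, hFvcard, (hSV W hWS).1]
          _ = T.toFinset.card * (p ^ k - p ^ c) := by
              rw [Finset.sum_const, smul_eq_mul]
          _ ≤ (s - 1) * (p ^ k - p ^ c) := by
              apply Nat.mul_le_mul_right
              have := Multiset.toFinset_card_le T
              omega
      have hlow : ∀ V ∈ S, p ^ (c + 1) - p ^ c ≤ (X.filter (fun x => x ∈ V)).card := by
        intro V hV
        obtain ⟨W, hWT, hD⟩ := key V hV
        have hsub : Fv (V ⊓ W) \ Fv C ⊆ X.filter (fun x => x ∈ V) := by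
          intro x hx
          rw [Finset.mem_sdiff, hFv] at hx
          simp only [Finset.mem_filter, Finset.mem_univ, true_and] at hx
          obtain ⟨hxVW, hxC⟩ := hx
          rw [Finset.mem_filter, hX]
          simp only [Finset.mem_filter, Finset.mem_univ, true_and]
          exact ⟨⟨⟨W, hWT, (Submodule.mem_inf.mp hxVW).2⟩, hxC⟩, (Submodule.mem_inf.mp hxVW).1⟩
        have hCD : Fv C ⊆ Fv (V ⊓ W) := hFvmono hD.le
        have hdim : c + 1 ≤ finrank (ZMod p) (V ⊓ W : Submodule (ZMod p) (Fin m → ZMod p)) :=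
          Submodule.finrank_lt_finrank_of_lt hD
        calc p ^ (c + 1) - p ^ c
            ≤ p ^ finrank (ZMod p) (V ⊓ W : Submodule (ZMod p) (Fin m → ZMod p)) - p ^ c :=
              Nat.sub_le_sub_right (Nat.pow_le_pow_right (by omega) hdim) _
          _ = (Fv (V ⊓ W) \ Fv C).card := by rw [Finset.card_sdiff_of_subset hCD, hFvcard, hFvcard]
          _ ≤ _ := Finset.card_le_card hsub
      set B := s ^ (j + 1) * p ^ ((j ^ 2 + j - 2) / 2) with hB
      have hBpos : 1 ≤ B := Nat.one_le_iff_ne_zero.mpr (by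
        rw [hB]
        positivity)
      have hpc1 : p ^ c ≤ p ^ (c + 1) - p ^ c := by
        have h2 : 2 * p ^ c ≤ p ^ (c + 1) := by
          rw [pow_succ, mul_comm]
          exact Nat.mul_le_mul_left _ hp1
        omega
      have hstep : (s - 1) * (p ^ k - p ^ c) * B ≤
          Multiset.card S * (p ^ (c + 1) - p ^ c) := by
        rcases Nat.eq_zero_or_pos j with rfl | hj1
        · have hc1 : c + 1 = k := by omega
          have hg0 : ((0:ℕ) ^ 2 + 0 - 2) / 2 = 0 := by norm_num
          have hg1 : (((0:ℕ) + 1) ^ 2 + (0 + 1) - 2) / 2 = 0 := by norm_num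
          rw [hB, hg0]
          rw [hg1] at hcard
          calc (s - 1) * (p ^ k - p ^ c) * (s ^ (0 + 1) * p ^ 0)
              ≤ (s * s) * (p ^ k - p ^ c) := by
                have : s ^ (0 + 1) * p ^ 0 = s := by ring
                rw [this]
                calc (s - 1) * (p ^ k - p ^ c) * s = (s - 1) * s * (p ^ k - p ^ c) := by ring
                  _ ≤ s * s * (p ^ k - p ^ c) :=
                    Nat.mul_le_mul_right _ (Nat.mul_le_mul_right _ (by omega))
            _ ≤ Multiset.card S * (p ^ (c + 1) - p ^ c) := by
                rw [hc1]
                apply Nat.mul_le_mul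
                · calc s * s = s ^ (0 + 1 + 1) * p ^ 0 := by ring
                    _ ≤ Multiset.card S := hcard
                · exact le_refl _
        · have hg : ((j + 1) ^ 2 + (j + 1) - 2) / 2 = (j ^ 2 + j - 2) / 2 + (j + 1) :=
            gdiv_rec hj1
          calc (s - 1) * (p ^ k - p ^ c) * B
              ≤ s * (p ^ (j + 1) * p ^ c) * B := by
                apply Nat.mul_le_mul_right
                apply Nat.mul_le_mul (by omega)
                calc p ^ k - p ^ c ≤ p ^ k := Nat.sub_le _ _
                  _ ≤ p ^ (j + 1 + c) := Nat.pow_le_pow_right (by omega) (by omega)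
                  _ = p ^ (j + 1) * p ^ c := pow_add p _ _
            _ = (s ^ (j + 1 + 1) * p ^ ((j ^ 2 + j - 2) / 2 + (j + 1))) * p ^ c := by
                rw [hB]; ring
            _ ≤ (s ^ (j + 1 + 1) * p ^ (((j + 1) ^ 2 + (j + 1) - 2) / 2)) * (p ^ (c + 1) - p ^ c) := by
                rw [hg]
                exact Nat.mul_le_mul_left _ hpc1
            _ ≤ Multiset.card S * (p ^ (c + 1) - p ^ c) := Nat.mul_le_mul_right _ hcard
      have hex : ∃ x ∈ X, B ≤ Multiset.card (S.filter (fun V => x ∈ V)) := by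
        by_contra hno
        push_neg at hno
        have h1 : ∑ x ∈ X, Multiset.card (S.filter (fun V => x ∈ V)) ≤ X.card * (B - 1) := by
          rw [← smul_eq_mul]
          apply Finset.sum_le_card_nsmul
          intro x hx
          have := hno x hx
          omega
        have h2 : Multiset.card S * (p ^ (c + 1) - p ^ c) ≤
            ∑ x ∈ X, Multiset.card (S.filter (fun V => x ∈ V)) := by
          rw [double_count S X (fun V x => x ∈ V)]
          calc Multiset.card S * (p ^ (c + 1) - p ^ c)
              = Multiset.card (S.map (fun V => (X.filter (fun x => x ∈ V)).card)) •
                  (p ^ (c + 1) - p ^ c) := by rw [Multiset.card_map, smul_eq_mul]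
            _ ≤ (S.map (fun V => (X.filter (fun x => x ∈ V)).card)).sum := by
                apply Multiset.card_nsmul_le_sum
                intro y hy
                obtain ⟨V, hV, rfl⟩ := Multiset.mem_map.mp hy
                exact hlow V hV
        have hDpos : 1 ≤ (s - 1) * (p ^ k - p ^ c) := by
          have hpk : p ^ c < p ^ k := Nat.pow_lt_pow_right hp1 hCk
          have h3 : 1 ≤ s - 1 := by omega
          calc 1 = 1 * 1 := by ring
            _ ≤ (s - 1) * (p ^ k - p ^ c) := Nat.mul_le_mul h3 (by omega)
        have hfin : (s - 1) * (p ^ k - p ^ c) * B ≤ (s - 1) * (p ^ k - p ^ c) * (B - 1) := by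
          calc (s - 1) * (p ^ k - p ^ c) * B ≤ Multiset.card S * (p ^ (c + 1) - p ^ c) := hstep
            _ ≤ X.card * (B - 1) := le_trans h2 h1
            _ ≤ (s - 1) * (p ^ k - p ^ c) * (B - 1) := Nat.mul_le_mul_right _ hXcard
        have := Nat.le_of_mul_le_mul_left hfin (by omega : 0 < (s - 1) * (p ^ k - p ^ c))
        omega
      obtain ⟨x, hxX, hxcard⟩ := hex
      rw [hX, Finset.mem_filter] at hxX
      obtain ⟨-, ⟨W₀, hW₀T, hxW₀⟩, hxC⟩ := hxX
      set C' := C ⊔ Submodule.span (ZMod p) {x} with hC'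
      have hxC' : x ∈ C' := by
        apply (le_sup_right : Submodule.span (ZMod p) {x} ≤ C')
        exact Submodule.mem_span_singleton_self x
      have hCC' : C < C' := lt_of_le_of_ne le_sup_left (fun h => hxC (h ▸ hxC'))
      have hrank : c + 1 ≤ finrank (ZMod p) C' := Submodule.finrank_lt_finrank_of_lt hCC'
      have hS' : ∀ V ∈ S.filter (fun V => x ∈ V), finrank (ZMod p) V = k ∧ C' ≤ V := by
        intro V hV
        rw [Multiset.mem_filter] at hV
        refine ⟨(hSV V hV.1).1, sup_le (hSV V hV.1).2 ?_⟩
        rw [Submodule.span_le, Set.singleton_subset_iff]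
        exact hV.2
      obtain ⟨V, hV1, hV2⟩ := ih C' (S.filter (fun V => x ∈ V)) (by omega) hS' hxcard
      exact ⟨V, hV1.trans (Multiset.filter_le _ S), hV2⟩

end Aux

/-- sunflower lemma for subspaces. -/
theorem sunflower_lemma_subspaces (p : ℕ) (hp : p.Prime) (m k s : ℕ)
    (hk : 1 ≤ k) (hmk : k < m) (hs : 1 ≤ s)
    (S : Multiset (Submodule (ZMod p) (Fin m → ZMod p)))
    (hdim : ∀ V ∈ S, Module.finrank (ZMod p) V = k)
    (hcard : s ^ (k + 1) * p ^ ((k ^ 2 + k - 2) / 2) ≤ Multiset.card S) :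
    ∃ V : Fin s → Submodule (ZMod p) (Fin m → ZMod p),
      (↑(List.ofFn V) : Multiset (Submodule (ZMod p) (Fin m → ZMod p))) ≤ S ∧
      ∀ i j, i ≠ j → V i ⊓ V j = ⨅ l, V l := by
  haveI : Fact p.Prime := ⟨hp⟩
  rcases eq_or_lt_of_le hs with hs1 | hs2
  · -- s = 1
    subst hs1
    have hpos : 0 < Multiset.card S := by
      refine lt_of_lt_of_le ?_ hcard
      have := hp.one_lt
      positivity
    obtain ⟨V₀, hV₀⟩ := Multiset.card_pos_iff_exists_mem.mp hpos
    refine ⟨fun _ => V₀, ?_, ?_⟩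
    · have h1 : List.ofFn (fun _ : Fin 1 => V₀) = [V₀] := by
        simp [List.ofFn_const]
      rw [h1]
      simpa using Multiset.singleton_le.mpr hV₀
    · intro i j hij
      exact absurd (Subsingleton.elim i j) hij
  · -- s ≥ 2
    refine sunflower_aux hk hs2 k ⊥ S ?_ (fun V hV => ⟨hdim V hV, bot_le⟩) hcard
    rw [finrank_bot]
    omega
end

section
/- For every positive integers d and K and every growth function f : ℕ → ℕ, there exists K' (depending only on d, K and f) such that the following holds: for every m and every factor F = (P₁,…,P_K) of functions 𝔽₂^m → 𝔽₂ each of degree at most d, there exist an integer L ≤ K' and a factor G = (Q₁,…,Q_L) of functions 𝔽₂^m → 𝔽₂ each of degree at most d such that G refines F and G is f(L)-regular. -/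
open Finset

/-- The (exact) degree of `P`: the least `d` such that `P` has degree at most `d`. -/
noncomputable def fdeg {m : ℕ} (P : (Fin m → ZMod 2) → ZMod 2) : ℕ :=
  sInf {d | DegLE d P}

/-- The factor `Q` refines the factor `P`. -/
def TupleRefines {m K L : ℕ} (Q : Fin L → (Fin m → ZMod 2) → ZMod 2)
    (P : Fin K → (Fin m → ZMod 2) → ZMod 2) : Prop :=
  ∃ Γ : (Fin L → ZMod 2) → (Fin K → ZMod 2),
    ∀ x, (fun i => P i x) = Γ (fun j => Q j x)

/-- The factor `P` is `r`-regular: every nonzero linear combination, of degree `ℓ`,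
has `rank_{ℓ-1}` greater than `r`. -/
def TupleRegular {m K : ℕ} (r : ℕ) (P : Fin K → (Fin m → ZMod 2) → ZMod 2) : Prop :=
  ∀ lam : Fin K → ZMod 2, lam ≠ 0 →
    ¬ RankLE (((Finset.univ.filter fun i => lam i = 1).sup fun i => fdeg (P i)) - 1) r
        (fun x => ∑ i, lam i * P i x)

/-- A growth function: nondecreasing and at least the identity. -/
def GrowthFn (f : ℕ → ℕ) : Prop := Monotone f ∧ ∀ r, r ≤ f r

lemma degLE_mono {m d d' : ℕ} {P : (Fin m → ZMod 2) → ZMod 2} (h : d ≤ d') (hP : DegLE d P) :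
    DegLE d' P := by
  obtain ⟨p, hp, he⟩ := hP; exact ⟨p, hp.trans h, he⟩

lemma fdeg_le {m d : ℕ} {P : (Fin m → ZMod 2) → ZMod 2} (hP : DegLE d P) : fdeg P ≤ d :=
  Nat.sInf_le hP

lemma degLE_fdeg {m d : ℕ} {P : (Fin m → ZMod 2) → ZMod 2} (hP : DegLE d P) :
    DegLE (fdeg P) P :=
by
  have := Nat.sInf_mem (s := {d | DegLE d P}) ⟨d, hP⟩
  exact this

lemma degLE_zero_const {m : ℕ} {P : (Fin m → ZMod 2) → ZMod 2} (hP : DegLE 0 P) :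
    ∃ c, ∀ x, P x = c := by
  obtain ⟨p, hp, he⟩ := hP
  have h0 : p.totalDegree = 0 := Nat.le_zero.mp hp
  rw [MvPolynomial.totalDegree_eq_zero_iff] at h0
  have hsupp : p.support ⊆ {0} := by
    intro d hd
    simp only [Finset.mem_singleton]
    ext i; exact h0 d hd i
  refine ⟨MvPolynomial.coeff 0 p, fun x => ?_⟩
  rw [← he x, MvPolynomial.eval_eq]
  rcases Finset.subset_singleton_iff.mp hsupp with h | h
  · rw [h, Finset.sum_empty]
    have : p = 0 := MvPolynomial.support_eq_empty.mp h
    simp [this]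
  · rw [h, Finset.sum_singleton]
    simp

lemma const_degLE {m : ℕ} (c : ZMod 2) : DegLE 0 (fun _ : Fin m → ZMod 2 => c) :=
  ⟨MvPolynomial.C c, by simp, fun x => by simp⟩

def Refines {m : ℕ} {ι κ : Type*} (Q : ι → (Fin m → ZMod 2) → ZMod 2)
    (P : κ → (Fin m → ZMod 2) → ZMod 2) : Prop :=
  ∃ Γ : (ι → ZMod 2) → (κ → ZMod 2),
    ∀ x, (fun i => P i x) = Γ (fun j => Q j x)

def Regular {m : ℕ} {ι : Type*} [Fintype ι] (r : ℕ)
    (P : ι → (Fin m → ZMod 2) → ZMod 2) : Prop :=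
  ∀ lam : ι → ZMod 2, lam ≠ 0 →
    ¬ RankLE (((Finset.univ.filter fun i => lam i = 1).sup fun i => fdeg (P i)) - 1) r
        (fun x => ∑ i, lam i * P i x)

lemma refines_trans {m : ℕ} {ι κ τ : Type*} {R : ι → (Fin m → ZMod 2) → ZMod 2}
    {Q : κ → (Fin m → ZMod 2) → ZMod 2} {P : τ → (Fin m → ZMod 2) → ZMod 2}
    (h1 : Refines R Q) (h2 : Refines Q P) : Refines R P := by
  obtain ⟨Γ1, hΓ1⟩ := h1
  obtain ⟨Γ2, hΓ2⟩ := h2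
  exact ⟨Γ2 ∘ Γ1, fun x => by rw [hΓ2 x, Function.comp_apply, hΓ1 x]⟩

lemma zmod2_ne_zero {u : ZMod 2} (h : u ≠ 0) : u = 1 := by
  have : ∀ v : ZMod 2, v ≠ 0 → v = 1 := by decide
  exact this u h

lemma zmod2_add_self (u : ZMod 2) : u + u = 0 := by
  have : ∀ v : ZMod 2, v + v = 0 := by decide
  exact this u

lemma key_sum {m : ℕ} {ι : Type*} [Fintype ι] [DecidableEq ι]
    (Q : ι → (Fin m → ZMod 2) → ZMod 2) (lam : ι → ZMod 2) (i₀ : ι) (h1 : lam i₀ = 1)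
    (x : Fin m → ZMod 2) :
    Q i₀ x = (∑ i, lam i * Q i x) + ∑ i' : {i // i ≠ i₀}, lam i'.1 * Q i'.1 x := by
  have hsub : ∑ i' : {i // i ≠ i₀}, lam i'.1 * Q i'.1 x
      = ∑ i ∈ Finset.univ.erase i₀, lam i * Q i x := by
    exact Finset.sum_subtype (Finset.univ.erase i₀) (fun i => by simp [eq_comm]) (fun i => lam i * Q i x) |>.symm
  have htot : ∑ i, lam i * Q i x
      = lam i₀ * Q i₀ x + ∑ i ∈ Finset.univ.erase i₀, lam i * Q i x :=
    (Finset.add_sum_erase _ _ (Finset.mem_univ i₀)).symm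
  rw [hsub, htot, h1, one_mul, add_assoc, zmod2_add_self, add_zero]

lemma step_lemma {m d r : ℕ} {ι : Type} [Fintype ι] [DecidableEq ι]
    (Q : ι → (Fin m → ZMod 2) → ZMod 2) (hdeg : ∀ i, DegLE d (Q i))
    (hirr : ¬ Regular r Q) :
    ∃ (i₀ : ι) (rr : ℕ) (R : Fin rr → (Fin m → ZMod 2) → ZMod 2), rr ≤ r ∧
      (∀ j, DegLE d (R j)) ∧ (∀ j, fdeg (R j) < fdeg (Q i₀)) ∧
      Refines (Sum.elim (fun i : {i // i ≠ i₀} => Q i.1) R) Q := by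
  rw [Regular] at hirr
  push_neg at hirr
  obtain ⟨lam, hlam0, hrank⟩ := hirr
  set ℓ := ((Finset.univ.filter fun i => lam i = 1).sup fun i => fdeg (Q i)) with hℓ
  have hsupp : ∃ i, i ∈ Finset.univ.filter fun i => lam i = 1 := by
    obtain ⟨i, hi⟩ := Function.ne_iff.mp hlam0
    exact ⟨i, by simp [zmod2_ne_zero hi]⟩
  -- common construction
  have main : ∀ (i₀ : ι), lam i₀ = 1 →
      ∀ (rr : ℕ) (R : Fin rr → (Fin m → ZMod 2) → ZMod 2)
        (Γ₁ : (Fin rr → ZMod 2) → ZMod 2),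
        (∀ x, (∑ i, lam i * Q i x) = Γ₁ (fun j => R j x)) →
        Refines (Sum.elim (fun i : {i // i ≠ i₀} => Q i.1) R) Q := by
    intro i₀ h1 rr R Γ₁ hval
    refine ⟨fun v i => if h : i = i₀ then
        Γ₁ (fun j => v (Sum.inr j)) + ∑ i' : {i // i ≠ i₀}, lam i'.1 * v (Sum.inl i')
      else v (Sum.inl ⟨i, h⟩), fun x => ?_⟩
    funext i
    by_cases h : i = i₀
    · subst h
      simp only [dif_pos rfl, Sum.elim_inr, Sum.elim_inl, ← hval x]
      exact key_sum Q lam i h1 x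
    · simp [dif_neg h]
  rcases Nat.eq_zero_or_pos ℓ with hℓ0 | hℓ1
  · -- all involved polynomials constant
    obtain ⟨i₀, hi₀⟩ := hsupp
    have h1 : lam i₀ = 1 := (Finset.mem_filter.mp hi₀).2
    have hconst : ∀ x, (∑ i, lam i * Q i x) = ∑ i, lam i * Q i (fun _ => 0) := by
      intro x
      refine Finset.sum_congr rfl fun i _ => ?_
      by_cases hli : lam i = 1
      · have hf : fdeg (Q i) = 0 := by
          have hmem : i ∈ Finset.univ.filter fun i => lam i = 1 := by simp [hli]
          have := Finset.le_sup (f := fun i => fdeg (Q i)) hmem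
          rw [← hℓ, hℓ0] at this
          exact Nat.le_zero.mp this
        have : DegLE 0 (Q i) := by
          have := degLE_fdeg (hdeg i); rwa [hf] at this
        obtain ⟨c, hc⟩ := degLE_zero_const this
        rw [hc x, hc (fun _ => 0)]
      · have : lam i = 0 := by
          have : ∀ v : ZMod 2, v ≠ 1 → v = 0 := by decide
          exact this _ hli
        simp [this]
    exact ⟨i₀, 0, fun j => 0, Nat.zero_le r, fun j => j.elim0, fun j => j.elim0,
      main i₀ h1 0 (fun j => 0) (fun _ => ∑ i, lam i * Q i (fun _ => 0)) hconst⟩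
  · -- top degree at least 1 : use the low-rank decomposition
    obtain ⟨i₀, hi₀, hsup⟩ := Finset.exists_mem_eq_sup _ hsupp fun i => fdeg (Q i)
    have h1 : lam i₀ = 1 := (Finset.mem_filter.mp hi₀).2
    obtain ⟨R, Γ₀, hRdeg, hS⟩ := hrank
    have hld : ℓ ≤ d := by rw [hℓ, hsup]; exact fdeg_le (hdeg i₀)
    refine ⟨i₀, r, R, le_refl r, fun j => ?_, fun j => ?_, main i₀ h1 r R Γ₀ hS⟩
    · exact degLE_mono (by omega : ℓ - 1 ≤ d) (hRdeg j)
    · have : fdeg (R j) ≤ ℓ - 1 := fdeg_le (hRdeg j)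
      omega

noncomputable def cnt {m : ℕ} (d : ℕ) {ι : Type*} [Fintype ι]
    (Q : ι → (Fin m → ZMod 2) → ZMod 2) (j : Fin (d+1)) : ℕ :=
  (Finset.univ.filter fun i => fdeg (Q i) = d - (j : ℕ)).card

lemma cnt_sum {m d : ℕ} {ι : Type*} [Fintype ι] [DecidableEq ι]
    (Q : ι → (Fin m → ZMod 2) → ZMod 2) (hdeg : ∀ i, DegLE d (Q i)) :
    ∑ j, cnt d Q j = Fintype.card ι := by
  have hle : ∀ i, fdeg (Q i) ≤ d := fun i => fdeg_le (hdeg i)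
  rw [← Finset.card_univ]
  rw [Finset.card_eq_sum_card_fiberwise
    (f := fun i => (⟨d - fdeg (Q i), by omega⟩ : Fin (d+1))) (fun i _ => Finset.mem_univ _)]
  refine Finset.sum_congr rfl fun j _ => ?_
  unfold cnt
  congr 1
  apply Finset.filter_congr
  intro i _
  have := hle i
  have hj : (j : ℕ) ≤ d := by omega
  rw [Fin.ext_iff]
  simp only
  omega

lemma card_filter_sum {α β : Type*} [Fintype α] [Fintype β] (p : α ⊕ β → Prop) [DecidablePred p] :
    (Finset.univ.filter p).card =
      (Finset.univ.filter fun a => p (Sum.inl a)).card +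
        (Finset.univ.filter fun b => p (Sum.inr b)).card := by
  classical
  rw [← Fintype.card_subtype, ← Fintype.card_subtype, ← Fintype.card_subtype, ← Fintype.card_sum]
  exact Fintype.card_congr Equiv.subtypeSum

lemma card_filter_subtype_ne {ι : Type*} [Fintype ι] [DecidableEq ι] (i₀ : ι) (p : ι → Prop)
    [DecidablePred p] :
    (Finset.univ.filter fun i' : {i // i ≠ i₀} => p i'.1).card =
      ((Finset.univ.filter p).erase i₀).card := by
  classical
  rw [← Fintype.card_subtype]
  rw [Fintype.card_congr (Equiv.subtypeSubtypeEquivSubtypeInter (· ≠ i₀) p)]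
  rw [Fintype.card_subtype]
  congr 1
  ext i
  simp [and_comm, Finset.mem_erase]

lemma refines_reindex {m : ℕ} {ι κ : Type*} (e : κ ≃ ι)
    (Q : ι → (Fin m → ZMod 2) → ZMod 2) : Refines (fun k => Q (e k)) Q :=
  ⟨fun v i => v (e.symm i), fun x => by funext i; simp⟩

lemma regular_reindex {m r : ℕ} {ι κ : Type*} [Fintype ι] [Fintype κ]
    (e : κ ≃ ι) (Q : ι → (Fin m → ZMod 2) → ZMod 2) (h : Regular r Q) :
    Regular r (fun k => Q (e k)) := by
  intro lam hlam0
  set lam' : ι → ZMod 2 := fun i => lam (e.symm i) with hlam'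
  have hlam'0 : lam' ≠ 0 := by
    intro h0
    apply hlam0
    funext k
    have := congrFun h0 (e k)
    simpa [hlam'] using this
  have hsup : ((Finset.univ.filter fun k => lam k = 1).sup fun k => fdeg (Q (e k)))
      = ((Finset.univ.filter fun i => lam' i = 1).sup fun i => fdeg (Q i)) := by
    apply le_antisymm
    · apply Finset.sup_le
      intro k hk
      have hk1 : lam k = 1 := (Finset.mem_filter.mp hk).2
      refine Finset.le_sup (f := fun i => fdeg (Q i)) ?_
      simp [hlam', hk1]
    · apply Finset.sup_le
      intro i hi
      have hi1 : lam' i = 1 := (Finset.mem_filter.mp hi).2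
      have : fdeg (Q i) = fdeg (Q (e (e.symm i))) := by simp
      rw [this]
      refine Finset.le_sup (f := fun k => fdeg (Q (e k))) ?_
      simpa [hlam'] using hi1
  have hsum : ∀ x, (∑ k, lam k * Q (e k) x) = ∑ i, lam' i * Q i x := by
    intro x
    rw [← Equiv.sum_comp e (fun i => lam' i * Q i x)]
    refine Finset.sum_congr rfl fun k _ => by simp [hlam']
  have := h lam' hlam'0
  rw [hsup]
  intro hc
  apply this
  obtain ⟨R, Γ, hR, hv⟩ := hc
  exact ⟨R, Γ, hR, fun x => by simp only [← hsum x]; exact hv x⟩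

lemma main_lemma (d : ℕ) (f : ℕ → ℕ) (hf : GrowthFn f) :
    ∀ c : Fin (d+1) → ℕ,
      ∃ K' : ℕ, ∀ (m : ℕ) (ι : Type) [Fintype ι] [DecidableEq ι]
        (Q : ι → (Fin m → ZMod 2) → ZMod 2),
        (∀ i, DegLE d (Q i)) → (∀ j, cnt d Q j = c j) →
        ∃ L' ≤ K', ∃ Q' : Fin L' → (Fin m → ZMod 2) → ZMod 2,
          (∀ i, DegLE d (Q' i)) ∧ Refines Q' Q ∧ Regular (f L') Q' := by
  suffices H : ∀ cl : Lex (Fin (d+1) → ℕ),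
      ∃ K' : ℕ, ∀ (m : ℕ) (ι : Type) [Fintype ι] [DecidableEq ι]
        (Q : ι → (Fin m → ZMod 2) → ZMod 2),
        (∀ i, DegLE d (Q i)) → (∀ j, cnt d Q j = ofLex cl j) →
        ∃ L' ≤ K', ∃ Q' : Fin L' → (Fin m → ZMod 2) → ZMod 2,
          (∀ i, DegLE d (Q' i)) ∧ Refines Q' Q ∧ Regular (f L') Q' by
    intro c; exact H (toLex c)
  intro cl
  induction cl using WellFoundedLT.induction with
  | _ cl IH =>
  set c : Fin (d+1) → ℕ := ofLex cl with hc
  set N : ℕ := ∑ j, c j with hN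
  set S : ℕ := N + f N with hS
  classical
  set bigF : Finset (Fin (d+1) → ℕ) :=
    Finset.image (fun g : Fin (d+1) → Fin (S+1) => fun j => (g j : ℕ)) Finset.univ with hbigF
  set g : (Fin (d+1) → ℕ) → ℕ := fun c' =>
    if h : toLex c' < cl then (IH (toLex c') h).choose else 0 with hg
  refine ⟨N ⊔ bigF.sup g, ?_⟩
  intro m ι _ _ Q hdeg hcnt
  have hL : Fintype.card ι = N := by
    rw [← cnt_sum Q hdeg]
    exact Finset.sum_congr rfl fun j _ => hcnt j
  by_cases hreg : Regular (f (Fintype.card ι)) Q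
  · -- already regular
    refine ⟨Fintype.card ι, by omega, fun k => Q ((Fintype.equivFin ι).symm k), ?_, ?_, ?_⟩
    · intro i; exact hdeg _
    · exact refines_reindex (Fintype.equivFin ι).symm Q
    · exact regular_reindex (Fintype.equivFin ι).symm Q hreg
  · -- do one refinement step
    obtain ⟨i₀, rr, R, hrr, hRdeg, hRlt, href⟩ := step_lemma Q hdeg hreg
    set ι' : Type := {i : ι // i ≠ i₀} ⊕ Fin rr with hι'
    set Q'' : ι' → (Fin m → ZMod 2) → ZMod 2 :=
      Sum.elim (fun i : {i // i ≠ i₀} => Q i.1) R with hQ''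
    have hdeg'' : ∀ k, DegLE d (Q'' k) := by
      rintro (⟨i, hi⟩ | j)
      · exact hdeg i
      · exact hRdeg j
    have hfi₀ : fdeg (Q i₀) ≤ d := fdeg_le (hdeg i₀)
    set j₀ : Fin (d+1) := ⟨d - fdeg (Q i₀), by omega⟩ with hj₀
    -- counts of the new factor
    have hcnt'' : ∀ j : Fin (d+1), cnt d Q'' j =
        ((Finset.univ.filter fun i => fdeg (Q i) = d - (j:ℕ)).erase i₀).card +
          (Finset.univ.filter fun jj : Fin rr => fdeg (R jj) = d - (j:ℕ)).card := by
      intro j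
      unfold cnt
      have hsplit := card_filter_sum (α := {i // i ≠ i₀}) (β := Fin rr)
        (p := fun k : {i : ι // i ≠ i₀} ⊕ Fin rr => fdeg (Q'' k) = d - (j:ℕ))
      rw [hsplit]
      congr 1
      exact card_filter_subtype_ne i₀ (fun i => fdeg (Q i) = d - (j:ℕ))
    have hRempty : ∀ j : Fin (d+1), (j:ℕ) ≤ d - fdeg (Q i₀) →
        (Finset.univ.filter fun jj : Fin rr => fdeg (R jj) = d - (j:ℕ)).card = 0 := by
      intro j hj
      rw [Finset.card_eq_zero, Finset.filter_eq_empty_iff]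
      intro jj _
      have h1 := hRlt jj
      have h2 : (j : ℕ) ≤ d := by omega
      omega
    have hlt : toLex (fun j => cnt d Q'' j) < cl := by
      refine ⟨j₀, ?_, ?_⟩
      · intro j hj
        have hjlt : (j : ℕ) < d - fdeg (Q i₀) := hj
        show cnt d Q'' j = c j
        rw [hcnt'' j, hRempty j (by omega), add_zero,
          Finset.erase_eq_of_notMem (by simp; omega)]
        exact hcnt j
      · have hi₀mem : i₀ ∈ Finset.univ.filter fun i => fdeg (Q i) = d - (j₀:ℕ) := by
          simp [hj₀]
          omega
        show cnt d Q'' j₀ < c j₀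
        rw [hcnt'' j₀, hRempty j₀ (by simp [hj₀]), add_zero,
          Finset.card_erase_of_mem hi₀mem]
        have hpos : 0 < (Finset.univ.filter fun i => fdeg (Q i) = d - (j₀:ℕ)).card :=
          Finset.card_pos.mpr ⟨i₀, hi₀mem⟩
        have h5 := hcnt j₀
        unfold cnt at h5
        omega
    -- entries of the new count vector are at most S
    have hcard'' : Fintype.card ι' = (Fintype.card ι - 1) + rr := by
      show Fintype.card ({i // i ≠ i₀} ⊕ Fin rr) = _
      rw [Fintype.card_sum, Fintype.card_fin]
      congr 1
      simp [Fintype.card_subtype_compl]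
    have hmono := hf.1
    have hboundS : ∀ j, cnt d Q'' j ≤ S := by
      intro j
      have h1 : cnt d Q'' j ≤ Fintype.card ι' := by
        unfold cnt
        rw [← Finset.card_univ]
        exact Finset.card_filter_le _ _
      have h2 : Fintype.card ι' ≤ N + f N := by
        rw [hcard'', hL]
        have := hrr
        rw [hL] at this
        omega
      omega
    have hmem : (fun j => cnt d Q'' j) ∈ bigF := by
      rw [hbigF, Finset.mem_image]
      exact ⟨fun j => ⟨cnt d Q'' j, by have := hboundS j; omega⟩, Finset.mem_univ _, rfl⟩
    -- apply the induction hypothesis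
    have hspec := (IH (toLex (fun j => cnt d Q'' j)) hlt).choose_spec
    obtain ⟨L', hL', Q''', hdeg''', href''', hreg'''⟩ :=
      hspec m ι' Q'' hdeg'' (fun j => rfl)
    refine ⟨L', ?_, Q''', hdeg''', refines_trans href''' href, hreg'''⟩
    have hgval : g (fun j => cnt d Q'' j) = (IH (toLex (fun j => cnt d Q'' j)) hlt).choose := by
      rw [hg]; exact dif_pos hlt
    have := Finset.le_sup (f := g) hmem
    rw [hgval] at this
    omega


/-- regularization of factors. -/
theorem regularization :
    ∀ d K : ℕ, 0 < d → 0 < K → ∀ f : ℕ → ℕ, GrowthFn f →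
      ∃ K' : ℕ, ∀ m : ℕ, ∀ P : Fin K → (Fin m → ZMod 2) → ZMod 2,
        (∀ i, DegLE d (P i)) →
        ∃ L ≤ K', ∃ Q : Fin L → (Fin m → ZMod 2) → ZMod 2,
          (∀ j, DegLE d (Q j)) ∧ TupleRefines Q P ∧ TupleRegular (f L) Q := by
  intro d K hd hK f hf
  classical
  choose Kc hKc using main_lemma d f hf
  set bigG : Finset (Fin (d+1) → ℕ) :=
    Finset.image (fun g : Fin (d+1) → Fin (K+1) => fun j => (g j : ℕ)) Finset.univ with hbigG
  refine ⟨bigG.sup Kc, ?_⟩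
  intro m P hP
  have hcard : ∀ j, cnt d P j ≤ K := by
    intro j
    unfold cnt
    calc (Finset.univ.filter fun i => fdeg (P i) = d - (j:ℕ)).card
        ≤ (Finset.univ : Finset (Fin K)).card := Finset.card_filter_le _ _
      _ = K := by simp
  have hmem : (fun j => cnt d P j) ∈ bigG := by
    rw [hbigG, Finset.mem_image]
    exact ⟨fun j => ⟨cnt d P j, by have := hcard j; omega⟩, Finset.mem_univ _, rfl⟩
  obtain ⟨L, hL, Q, hdQ, href, hreg⟩ := hKc (fun j => cnt d P j) m (Fin K) P hP (fun j => rfl)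
  exact ⟨L, hL.trans (Finset.le_sup hmem), Q, hdQ, href, hreg⟩
end
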